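/- Let X and Y be real normed vector spaces, A : X → Y a map, Q a nonempty subset of X, and δ > 0. If T : X → Y is a linear map (not assumed continuous) such that U_δ(T) = sup{‖Ax − Tη‖ : x ∈ Q, η ∈ X, ‖x − η‖ ≤ δ} is finite, then T is a bounded (continuous) linear operator. Consequently, the optimal recovery error over all linear maps equals the optimal recovery error over all bounded linear operators: inf{U_δ(T) : T linear} = inf{U_δ(T) : T bounded linear}. -/

import Mathlib

open scoped ENNReal NNReal

private lemma recovery_cont
    {X Y : Type*} [NormedAddCommGroup X] [NormedSpace ℝ X]
    [NormedAddCommGroup Y] [NormedSpace ℝ Y]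
    (A : X → Y) (Q : Set X) (hQ : Q.Nonempty) (δ : ℝ) (hδ : 0 < δ)
    (T : X →ₗ[ℝ] Y)
    (hT : (⨆ x ∈ Q, ⨆ η : X, ⨆ _ : ‖x - η‖ ≤ δ, (‖A x - T η‖₊ : ℝ≥0∞)) ≠ ⊤) :
    Continuous T := by
  obtain ⟨x₀, hx₀⟩ := hQ
  set S := (⨆ x ∈ Q, ⨆ η : X, ⨆ _ : ‖x - η‖ ≤ δ, (‖A x - T η‖₊ : ℝ≥0∞)) with hS
  set M := S.toReal with hM
  -- bound near x₀
  have key : ∀ η : X, ‖x₀ - η‖ ≤ δ → ‖A x₀ - T η‖ ≤ M := by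
    intro η hη
    have hle : (‖A x₀ - T η‖₊ : ℝ≥0∞) ≤ S := by
      rw [hS]
      refine le_trans ?_ (le_iSup₂ (f := fun x (_ : x ∈ Q) =>
        ⨆ η : X, ⨆ _ : ‖x - η‖ ≤ δ, (‖A x - T η‖₊ : ℝ≥0∞)) x₀ hx₀)
      exact le_trans (le_iSup₂ (f := fun η (_ : ‖x₀ - η‖ ≤ δ) =>
        (‖A x₀ - T η‖₊ : ℝ≥0∞)) η hη) le_rfl
    have := ENNReal.toReal_mono hT hle
    simpa using this
  -- bound on ball of radius δ around 0
  have ball : ∀ v : X, ‖v‖ ≤ δ → ‖T v‖ ≤ 2 * (M + ‖A x₀‖) := by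
    intro v hv
    have h1 : ‖A x₀ - T (x₀ + v)‖ ≤ M := key _ (by simpa using hv)
    have h2 : ‖A x₀ - T x₀‖ ≤ M := key _ (by simpa using le_of_lt hδ)
    have hTv : T v = (A x₀ - T x₀) - (A x₀ - T (x₀ + v)) := by
      rw [map_add]; abel
    rw [hTv]
    calc ‖(A x₀ - T x₀) - (A x₀ - T (x₀ + v))‖
        ≤ ‖A x₀ - T x₀‖ + ‖A x₀ - T (x₀ + v)‖ := norm_sub_le _ _
      _ ≤ M + M := add_le_add h2 h1
      _ ≤ 2 * (M + ‖A x₀‖) := by nlinarith [norm_nonneg (A x₀)]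
  set C := 2 * (M + ‖A x₀‖) / δ with hC
  refine AddMonoidHomClass.continuous_of_bound T C fun x => ?_
  rcases eq_or_ne x 0 with rfl | hx
  · simp
  · have hxn : 0 < ‖x‖ := norm_pos_iff.mpr hx
    have hv : ‖(δ / ‖x‖) • x‖ ≤ δ := by
      rw [norm_smul, Real.norm_eq_abs, abs_of_pos (by positivity)]
      field_simp
      exact le_rfl
    have := ball _ hv
    rw [map_smul, norm_smul, Real.norm_eq_abs, abs_of_pos (by positivity)] at this
    have hδx : 0 < δ / ‖x‖ := by positivity
    calc ‖T x‖ = (‖x‖ / δ) * ((δ / ‖x‖) * ‖T x‖) := by field_simp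
      _ ≤ (‖x‖ / δ) * (2 * (M + ‖A x₀‖)) := by
          apply mul_le_mul_of_nonneg_left this (by positivity)
      _ = C * ‖x‖ := by rw [hC]; ring

/-- If `Q` is nonempty, `δ > 0`, and a linear map `T` has finite recovery error
`U_δ(T)`, then `T` is continuous (bounded); consequently the optimal recovery
error over all linear maps equals the optimal recovery error over all bounded
linear operators. All suprema/infima of families of norms are taken in `ℝ≥0∞`. -/
theorem optimal_recovery_linear_eq_bounded
    {X Y : Type*} [NormedAddCommGroup X] [NormedSpace ℝ X]
    [NormedAddCommGroup Y] [NormedSpace ℝ Y]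
    (A : X → Y) (Q : Set X) (hQ : Q.Nonempty) (δ : ℝ) (hδ : 0 < δ) :
    (∀ T : X →ₗ[ℝ] Y,
      (⨆ x ∈ Q, ⨆ η : X, ⨆ _ : ‖x - η‖ ≤ δ, (‖A x - T η‖₊ : ℝ≥0∞)) ≠ ⊤ →
        Continuous T) ∧
    (⨅ T : X →ₗ[ℝ] Y,
        ⨆ x ∈ Q, ⨆ η : X, ⨆ _ : ‖x - η‖ ≤ δ, (‖A x - T η‖₊ : ℝ≥0∞))
      = ⨅ T : X →L[ℝ] Y,
          ⨆ x ∈ Q, ⨆ η : X, ⨆ _ : ‖x - η‖ ≤ δ, (‖A x - T η‖₊ : ℝ≥0∞) := by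
  refine ⟨recovery_cont A Q hQ δ hδ, le_antisymm ?_ ?_⟩
  · exact le_iInf fun S => iInf_le_of_le S.toLinearMap le_rfl
  · refine le_iInf fun T => ?_
    by_cases hT : (⨆ x ∈ Q, ⨆ η : X, ⨆ _ : ‖x - η‖ ≤ δ, (‖A x - T η‖₊ : ℝ≥0∞)) = ⊤
    · rw [hT]; exact le_top
    · exact iInf_le_of_le ⟨T, recovery_cont A Q hQ δ hδ T hT⟩ le_rfl
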